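/- If w lies in the commutator subgroup [F₂, F₂], then the trace polynomial satisfies P_w(s,t,u) − 2 is divisible by F(s,t,u) = s² + t² + u² − stu − 4 in ℚ[s,t,u]; i.e., there exists Q_w ∈ ℚ[s,t,u] with P_w = Q_w·F + 2. -/

import Mathlib

open MvPolynomial

lemma eval_empty_injective : Function.Injective (MvPolynomial.eval (![] : Fin 0 → ℚ)) := by
  have h : (MvPolynomial.eval (![] : Fin 0 → ℚ)) = (MvPolynomial.isEmptyRingEquiv ℚ (Fin 0) : MvPolynomial (Fin 0) ℚ →+* ℚ) := by
    apply MvPolynomial.ringHom_ext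
    · intro a; simp [isEmptyRingEquiv]; exact (MvPolynomial.coeff_zero_C a).symm
    · intro i; exact i.elim0
  rw [h]
  exact (MvPolynomial.isEmptyRingEquiv ℚ (Fin 0)).injective

lemma mv1_eq_zero {r : MvPolynomial (Fin 1) ℚ} {S : Set ℚ} (hS : S.Infinite)
    (h : ∀ u ∈ S, MvPolynomial.eval ![u] r = 0) : r = 0 := by
  have key : Polynomial.map (MvPolynomial.eval (![] : Fin 0 → ℚ)) (finSuccEquiv ℚ 0 r) = 0 := by
    apply Polynomial.eq_zero_of_infinite_isRoot
    apply hS.mono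
    intro u hu
    have := h u hu
    rw [show (![u] : Fin 1 → ℚ) = Fin.cons u ![] from rfl,
      MvPolynomial.eval_eq_eval_mv_eval'] at this
    exact this
  have h2 : finSuccEquiv ℚ 0 r = 0 :=
    Polynomial.map_injective _ eval_empty_injective (by simpa using key)
  have := (finSuccEquiv ℚ 0).injective (by simpa using h2)
  simpa using this

lemma mv2_eq_zero {r : MvPolynomial (Fin 2) ℚ} {U : Set ℚ} (hU : U.Infinite)
    (S : ℚ → Set ℚ) (hS : ∀ u ∈ U, (S u).Infinite)
    (h : ∀ u ∈ U, ∀ t ∈ S u, MvPolynomial.eval ![t, u] r = 0) : r = 0 := by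
  have key : ∀ u ∈ U, Polynomial.map (MvPolynomial.eval (![u] : Fin 1 → ℚ))
      (finSuccEquiv ℚ 1 r) = 0 := by
    intro u hu
    apply Polynomial.eq_zero_of_infinite_isRoot
    apply (hS u hu).mono
    intro t ht
    have := h u hu t ht
    rw [show (![t, u] : Fin 2 → ℚ) = Fin.cons t ![u] from rfl,
      MvPolynomial.eval_eq_eval_mv_eval'] at this
    exact this
  have h2 : finSuccEquiv ℚ 1 r = 0 := by
    apply Polynomial.ext
    intro k
    have : (finSuccEquiv ℚ 1 r).coeff k = 0 := by
      apply mv1_eq_zero hU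
      intro u hu
      have := key u hu
      have := congrArg (fun p => Polynomial.coeff p k) this
      simpa [Polynomial.coeff_map] using this
    simpa using this
  have := (finSuccEquiv ℚ 1).injective (by simpa using h2)
  simpa using this

/-- Diagonal embedding of units into SL₂. -/
def Dh : ℚˣ →* Matrix.SpecialLinearGroup (Fin 2) ℚ where
  toFun u := ⟨!![(u : ℚ), 0; 0, ((u⁻¹ : ℚˣ) : ℚ)], by
    simp [Matrix.det_fin_two_of]⟩
  map_one' := by
    apply Subtype.ext
    simp only [Units.val_one, inv_one]
    exact (Matrix.one_fin_two).symm
  map_mul' a b := by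
    apply Subtype.ext
    show _ = (!![(a : ℚ), 0; 0, ((a⁻¹ : ℚˣ) : ℚ)] * !![(b : ℚ), 0; 0, ((b⁻¹ : ℚˣ) : ℚ)])
    rw [Matrix.mul_fin_two]
    simp [mul_comm]

lemma lift_Dh (x y : ℚˣ) :
    (FreeGroup.lift ![Dh x, Dh y] : FreeGroup (Fin 2) →* Matrix.SpecialLinearGroup (Fin 2) ℚ)
      = Dh.comp (FreeGroup.lift ![x, y]) := by
  apply FreeGroup.ext_hom
  intro a
  fin_cases a <;> simp

lemma hom_commutator_eq_one {G A : Type*} [Group G] [CommGroup A] (f : G →* A)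
    {w : G} (hw : w ∈ commutator G) : f w = 1 := by
  have h : commutator G ≤ f.ker := by
    rw [commutator, Subgroup.commutator_le]
    intro g₁ _ g₂ _
    rw [MonoidHom.mem_ker, map_commutatorElement]
    exact commutatorElement_eq_one_iff_commute.mpr (mul_comm _ _)
  exact h hw

lemma lift_diag_eq_one {w : FreeGroup (Fin 2)} (hw : w ∈ commutator (FreeGroup (Fin 2)))
    (x y : ℚˣ) :
    (FreeGroup.lift ![Dh x, Dh y] w : Matrix.SpecialLinearGroup (Fin 2) ℚ) = 1 := by
  rw [lift_Dh]
  simp only [MonoidHom.comp_apply]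
  rw [hom_commutator_eq_one _ hw, map_one]
open MvPolynomial Polynomial

noncomputable def Fp : MvPolynomial (Fin 3) ℚ :=
  X 0 ^ 2 + X 1 ^ 2 + X 2 ^ 2 - X 0 * X 1 * X 2 - 4

lemma hF' : finSuccEquiv ℚ 2 Fp =
    Polynomial.X ^ 2 + (Polynomial.C (-(X 0 * X 1)) * Polynomial.X
      + Polynomial.C (X 0 ^ 2 + X 1 ^ 2 - 4)) := by
  have h1 : (1 : Fin 3) = Fin.succ 0 := rfl
  have h2 : (2 : Fin 3) = Fin.succ 1 := rfl
  rw [Fp, h1, h2]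
  simp only [map_add, map_sub, map_mul, map_pow, map_ofNat,
    finSuccEquiv_X_zero, finSuccEquiv_X_succ, map_neg]
  ring_nf

lemma monicF' : (finSuccEquiv ℚ 2 Fp).Monic := by
  rw [hF']
  exact Polynomial.monic_X_pow_add (lt_of_le_of_lt Polynomial.degree_linear_le (by norm_num))

lemma degF' : (finSuccEquiv ℚ 2 Fp).degree = 2 := by
  rw [hF']
  rw [Polynomial.degree_add_eq_left_of_degree_lt]
  · simp
  · apply lt_of_le_of_lt Polynomial.degree_linear_le
    simp

lemma Sset_infinite : ((fun y : ℚ => y + y⁻¹) '' Set.Ioi 1).Infinite := by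
  apply Set.Infinite.image ?_ (Set.Ioi_infinite 1)
  intro a ha b hb hab
  by_contra hne
  rcases lt_or_gt_of_ne hne with h | h
  all_goals {
    simp only [Set.mem_Ioi] at ha hb
    have ha0 : a ≠ 0 := by positivity
    have hb0 : b ≠ 0 := by positivity
    have h1 : a * a⁻¹ = 1 := mul_inv_cancel₀ ha0
    have h2 : b * b⁻¹ = 1 := mul_inv_cancel₀ hb0
    nlinarith [mul_pos (sub_pos.mpr h) (show (0:ℚ) < a * b - 1 by nlinarith), hab,
      mul_pos (show (0:ℚ) < a by linarith) (show (0:ℚ) < b by linarith)]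
  }

lemma Fp_vanish (a b : ℚ) (ha : a ≠ 0) (hb : b ≠ 0) :
    MvPolynomial.eval ![a + a⁻¹, b + b⁻¹, a * b + (a * b)⁻¹] Fp = 0 := by
  simp [Fp]
  field_simp
  ring

theorem main_glue (g : MvPolynomial (Fin 3) ℚ)
    (hev : ∀ x y : ℚ, x ≠ 0 → y ≠ 0 →
      MvPolynomial.eval ![x + x⁻¹, y + y⁻¹, x * y + (x * y)⁻¹] g = 0) :
    ∃ Q : MvPolynomial (Fin 3) ℚ, g = Q * Fp := by
  set F' := finSuccEquiv ℚ 2 Fp with hF'def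
  set g' := finSuccEquiv ℚ 2 g with hg'def
  set r := g' %ₘ F' with hrdef
  set q := g' /ₘ F' with hqdef
  have hdiv : r + F' * q = g' := Polynomial.modByMonic_add_div g' F'
  have hdeg : r.degree < 2 := degF' ▸ Polynomial.degree_modByMonic_lt g' monicF'
  have hr : r = Polynomial.C (r.coeff 1) * Polynomial.X + Polynomial.C (r.coeff 0) :=
    Polynomial.eq_X_add_C_of_degree_le_one (Order.lt_succ_iff.mp hdeg)
  -- evaluation identity
  have keylin : ∀ s t u : ℚ, MvPolynomial.eval ![s, t, u] g = 0 →
      MvPolynomial.eval ![s, t, u] Fp = 0 →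
      (MvPolynomial.eval ![t, u] (r.coeff 1)) * s + MvPolynomial.eval ![t, u] (r.coeff 0) = 0 := by
    intro s t u hg0 hFp0
    have e1 : MvPolynomial.eval ![s, t, u] g
        = Polynomial.eval s (Polynomial.map (MvPolynomial.eval ![t, u]) g') := by
      rw [show (![s, t, u] : Fin 3 → ℚ) = Fin.cons s ![t, u] from rfl]
      exact eval_eq_eval_mv_eval' ![t, u] s g
    have e2 : MvPolynomial.eval ![s, t, u] Fp
        = Polynomial.eval s (Polynomial.map (MvPolynomial.eval ![t, u]) F') := by
      rw [show (![s, t, u] : Fin 3 → ℚ) = Fin.cons s ![t, u] from rfl]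
      exact eval_eq_eval_mv_eval' ![t, u] s Fp
    rw [← hdiv] at e1
    rw [hr] at e1
    simp only [Polynomial.map_add, Polynomial.map_mul, Polynomial.map_C, Polynomial.map_X,
      Polynomial.eval_add, Polynomial.eval_mul, Polynomial.eval_C, Polynomial.eval_X] at e1
    rw [← e2] at e1
    rw [hFp0] at e1
    rw [hg0] at e1
    linarith [e1]
  -- the grid of points
  have hpts : ∀ c y : ℚ, 1 < c → 1 < y →
      ∀ s ∈ ({c / y + (c / y)⁻¹, c * y + (c * y)⁻¹} : Set ℚ),
      (MvPolynomial.eval ![y + y⁻¹, c + c⁻¹] (r.coeff 1)) * s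
        + MvPolynomial.eval ![y + y⁻¹, c + c⁻¹] (r.coeff 0) = 0 := by
    intro c y hc hy s hs
    have hc0 : c ≠ 0 := by positivity
    have hy0 : y ≠ 0 := by positivity
    rcases hs with h | h
    · subst h
      have hx0 : c / y ≠ 0 := div_ne_zero hc0 hy0
      have h1 := hev (c / y) y hx0 hy0
      have h2 := Fp_vanish (c / y) y hx0 hy0
      rw [show c / y * y = c from by field_simp] at h1 h2
      exact keylin _ _ _ h1 h2
    · simp only [Set.mem_singleton_iff] at h
      subst h
      have hx0 : c * y ≠ 0 := mul_ne_zero hc0 hy0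
      have h1 := hev (c * y) y⁻¹ hx0 (inv_ne_zero hy0)
      have h2 := Fp_vanish (c * y) y⁻¹ hx0 (inv_ne_zero hy0)
      rw [show c * y * y⁻¹ = c from by field_simp, inv_inv,
        show y⁻¹ + y = y + y⁻¹ from add_comm _ _] at h1 h2
      exact keylin _ _ _ h1 h2
  have hne : ∀ c y : ℚ, 1 < c → 1 < y → c / y + (c / y)⁻¹ ≠ c * y + (c * y)⁻¹ := by
    intro c y hc hy
    have hc0 : (0:ℚ) < c := by linarith
    have hy0 : (0:ℚ) < y := by linarith
    have key : c * y + (c * y)⁻¹ - (c / y + (c / y)⁻¹)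
        = (c ^ 2 - 1) * (y ^ 2 - 1) / (c * y) := by
      field_simp
      ring
    intro hcon
    have : (c ^ 2 - 1) * (y ^ 2 - 1) / (c * y) = 0 := by rw [← key, hcon]; ring
    have h1 : (0:ℚ) < (c ^ 2 - 1) * (y ^ 2 - 1) / (c * y) := by
      apply div_pos (mul_pos (by nlinarith) (by nlinarith)) (by positivity)
    linarith
  -- coeff 1 vanishes
  have hc1 : r.coeff 1 = 0 := by
    apply mv2_eq_zero Sset_infinite (fun _ => (fun y : ℚ => y + y⁻¹) '' Set.Ioi 1)
      (fun _ _ => Sset_infinite)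
    rintro u ⟨c, hc, rfl⟩ t ⟨y, hy, rfl⟩
    simp only [Set.mem_Ioi] at hc hy
    have e1 := hpts c y hc hy _ (Or.inl rfl)
    have e2 := hpts c y hc hy _ (Or.inr rfl)
    have hne' := hne c y hc hy
    by_contra hcon
    apply hne'
    have hA : MvPolynomial.eval ![y + y⁻¹, c + c⁻¹] (r.coeff 1) ≠ 0 := hcon
    have := sub_eq_zero.mpr (e1.trans e2.symm)
    rw [show (MvPolynomial.eval ![y + y⁻¹, c + c⁻¹] (r.coeff 1)) * (c / y + (c / y)⁻¹)
        + MvPolynomial.eval ![y + y⁻¹, c + c⁻¹] (r.coeff 0)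
        - ((MvPolynomial.eval ![y + y⁻¹, c + c⁻¹] (r.coeff 1)) * (c * y + (c * y)⁻¹)
        + MvPolynomial.eval ![y + y⁻¹, c + c⁻¹] (r.coeff 0))
        = (MvPolynomial.eval ![y + y⁻¹, c + c⁻¹] (r.coeff 1))
          * ((c / y + (c / y)⁻¹) - (c * y + (c * y)⁻¹)) from by ring] at this
    have := (mul_eq_zero.mp this).resolve_left hA
    linarith [sub_eq_zero.mp this]
  have hc0' : r.coeff 0 = 0 := by
    apply mv2_eq_zero Sset_infinite (fun _ => (fun y : ℚ => y + y⁻¹) '' Set.Ioi 1)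
      (fun _ _ => Sset_infinite)
    rintro u ⟨c, hc, rfl⟩ t ⟨y, hy, rfl⟩
    simp only [Set.mem_Ioi] at hc hy
    have e1 := hpts c y hc hy _ (Or.inl rfl)
    rw [hc1] at e1
    simpa using e1
  have hr0 : r = 0 := by rw [hr, hc1, hc0']; simp
  rw [hr0, zero_add] at hdiv
  refine ⟨(finSuccEquiv ℚ 2).symm q, ?_⟩
  have := congrArg (finSuccEquiv ℚ 2).symm hdiv
  simp only [map_mul, hF'def, hg'def, AlgEquiv.symm_apply_apply] at this
  rw [← this]
  ring

lemma Dh_def (u : ℚˣ) : (Dh u : Matrix (Fin 2) (Fin 2) ℚ) = !![(u : ℚ), 0; 0, ((u⁻¹ : ℚˣ) : ℚ)] :=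
  rfl

/-- If `w` lies in the commutator subgroup of the free group on two generators, then
its trace polynomial `P_w` satisfies `P_w = Q_w·F + 2` in `ℚ[s,t,u]`, where
`F = s² + t² + u² − stu − 4`. -/
theorem trace_polynomial_commutator_divisible
    (w : FreeGroup (Fin 2)) (hw : w ∈ commutator (FreeGroup (Fin 2)))
    (P : MvPolynomial (Fin 3) ℤ)
    (hP : ∀ (K : Type) [Field K] [CharZero K] (A B : Matrix.SpecialLinearGroup (Fin 2) K),
      Matrix.trace ((FreeGroup.lift ![A, B] w : Matrix.SpecialLinearGroup (Fin 2) K) :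
          Matrix (Fin 2) (Fin 2) K) =
        MvPolynomial.eval
          ![Matrix.trace (A : Matrix (Fin 2) (Fin 2) K),
            Matrix.trace (B : Matrix (Fin 2) (Fin 2) K),
            Matrix.trace ((A * B : Matrix.SpecialLinearGroup (Fin 2) K) :
              Matrix (Fin 2) (Fin 2) K)]
          (MvPolynomial.map (Int.castRingHom K) P)) :
    ∃ Q : MvPolynomial (Fin 3) ℚ,
      MvPolynomial.map (Int.castRingHom ℚ) P =
        Q * (MvPolynomial.X 0 ^ 2 + MvPolynomial.X 1 ^ 2 + MvPolynomial.X 2 ^ 2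
          - MvPolynomial.X 0 * MvPolynomial.X 1 * MvPolynomial.X 2 - 4) + 2 := by
  have hev : ∀ x y : ℚ, x ≠ 0 → y ≠ 0 →
      MvPolynomial.eval ![x + x⁻¹, y + y⁻¹, x * y + (x * y)⁻¹]
        (MvPolynomial.map (Int.castRingHom ℚ) P - 2) = 0 := by
    intro x y hx hy
    have h := hP ℚ (Dh (Units.mk0 x hx)) (Dh (Units.mk0 y hy))
    rw [lift_diag_eq_one hw] at h
    rw [← map_mul Dh] at h
    rw [Dh_def, Dh_def, Dh_def] at h
    simp only [Matrix.trace_fin_two_of, Matrix.SpecialLinearGroup.coe_one,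
      Matrix.trace_one] at h
    simp only [Units.val_inv_eq_inv_val, Units.val_mk0, Units.val_mul] at h
    simp only [map_sub, ← h]
    norm_num
  obtain ⟨Q, hQ⟩ := main_glue _ hev
  refine ⟨Q, ?_⟩
  have : MvPolynomial.map (Int.castRingHom ℚ) P - 2 = Q * Fp := hQ
  rw [Fp] at this
  linear_combination this
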